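/- Let φ₁,…,φ_N be contracting similarities on ℝ^d with the open set condition (feasible open set O), attractor K, and suppose B ⊂ O is an open set with ∂B ⊂ K. Then for every finite word ω over {1,…,N}, K_ε ∩ φ_ω(B) = (φ_ω(K))_ε ∩ φ_ω(B) for every ε > 0 such that the sets φ_σ(O) for words σ of the same length as ω are pairwise disjoint (which holds automatically by OSC). -/

import Mathlib

open Metric Set

/-- The composition `φ_ω = φ_{ω₁} ∘ ⋯ ∘ φ_{ω_n}` of an IFS along a finite word. -/
def iterMap {d N : ℕ}
    (φ : Fin N → EuclideanSpace ℝ (Fin d) → EuclideanSpace ℝ (Fin d)) :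
    List (Fin N) → EuclideanSpace ℝ (Fin d) → EuclideanSpace ℝ (Fin d)
  | [] => id
  | i :: ω => φ i ∘ iterMap φ ω

namespace Stmt14Aux

variable {d N : ℕ} {φ : Fin N → EuclideanSpace ℝ (Fin d) → EuclideanSpace ℝ (Fin d)}

/-- A similarity of Euclidean space is surjective. -/
lemma sim_surj {f : EuclideanSpace ℝ (Fin d) → EuclideanSpace ℝ (Fin d)} {r : ℝ}
    (hr : 0 < r) (hf : ∀ x y, dist (f x) (f y) = r * dist x y) :
    Function.Surjective f := by
  set g : EuclideanSpace ℝ (Fin d) → EuclideanSpace ℝ (Fin d) := fun x => f (r⁻¹ • x) with hg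
  have hgiso : Isometry g := by
    apply Isometry.of_dist_eq
    intro x y
    rw [hg]
    simp only
    rw [hf, dist_smul₀, Real.norm_eq_abs, abs_of_pos (inv_pos.2 hr)]
    field_simp
  have hgsurj : Function.Surjective g := by
    set A := hgiso.affineIsometryOfStrictConvexSpace with hA
    have hlin : Function.Surjective A.linearIsometry.toLinearMap :=
      (LinearMap.injective_iff_surjective).mp A.linearIsometry.injective
    intro y
    obtain ⟨v, hv⟩ := hlin (y - A 0)
    refine ⟨v, ?_⟩
    have h1 : A.toAffineMap.linear (v -ᵥ (0:EuclideanSpace ℝ (Fin d))) = A v -ᵥ A 0 :=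
      A.toAffineMap.linearMap_vsub v 0
    have h2 : A.toAffineMap.linear = A.linearIsometry.toLinearMap := rfl
    rw [h2] at h1
    rw [vsub_eq_sub, sub_zero] at h1
    have hgA : g v = A v := rfl
    rw [hgA]
    rw [hv, vsub_eq_sub] at h1
    linear_combination (norm := abel) h1.symm
  intro y
  obtain ⟨z, hz⟩ := hgsurj y
  exact ⟨r⁻¹ • z, hz⟩

lemma sim_inj {f : EuclideanSpace ℝ (Fin d) → EuclideanSpace ℝ (Fin d)} {r : ℝ}
    (hr : 0 < r) (hf : ∀ x y, dist (f x) (f y) = r * dist x y) :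
    Function.Injective f := by
  intro x y h
  have := hf x y
  rw [h, dist_self] at this
  have : dist x y = 0 := by
    have := this.symm
    nlinarith [dist_nonneg (x := x) (y := y)]
  exact dist_eq_zero.mp this

lemma sim_cont {f : EuclideanSpace ℝ (Fin d) → EuclideanSpace ℝ (Fin d)} {r : ℝ}
    (hr : 0 < r) (hf : ∀ x y, dist (f x) (f y) = r * dist x y) :
    Continuous f := by
  refine (LipschitzWith.of_dist_le_mul (K := ⟨r, hr.le⟩) ?_).continuous
  intro x y
  rw [hf]
  exact le_rfl

lemma sim_isOpenMap {f : EuclideanSpace ℝ (Fin d) → EuclideanSpace ℝ (Fin d)} {r : ℝ}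
    (hr : 0 < r) (hf : ∀ x y, dist (f x) (f y) = r * dist x y) :
    IsOpenMap f := by
  intro U hU
  rw [Metric.isOpen_iff]
  rintro _ ⟨x, hx, rfl⟩
  obtain ⟨s, hs, hball⟩ := Metric.isOpen_iff.mp hU x hx
  refine ⟨r * s, by positivity, ?_⟩
  intro z hz
  obtain ⟨w, rfl⟩ := sim_surj hr hf z
  refine ⟨w, hball ?_, rfl⟩
  rw [mem_ball] at hz ⊢
  rw [hf] at hz
  nlinarith

/-- similarity ratio of `iterMap φ ω` -/
lemma iterMap_sim (r : Fin N → ℝ) (hrd : ∀ i x y, dist (φ i x) (φ i y) = r i * dist x y) :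
    ∀ ω : List (Fin N), ∀ x y,
      dist (iterMap φ ω x) (iterMap φ ω y) = (ω.map r).prod * dist x y := by
  intro ω
  induction ω with
  | nil => intro x y; simp [iterMap]
  | cons i ω ih =>
    intro x y
    simp only [iterMap, Function.comp_apply, List.map_cons, List.prod_cons]
    rw [hrd, ih, mul_assoc]

lemma rword_pos (r : Fin N → ℝ) (hr0 : ∀ i, 0 < r i) (ω : List (Fin N)) :
    0 < (ω.map r).prod := by
  induction ω with
  | nil => simp
  | cons i ω ih => simp only [List.map_cons, List.prod_cons]; exact mul_pos (hr0 i) ih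

lemma rword_le (r : Fin N → ℝ) (ρ : ℝ) (hr0 : ∀ i, 0 < r i) (hρ : ∀ i, r i ≤ ρ)
    (hρ0 : 0 ≤ ρ) (ω : List (Fin N)) : (ω.map r).prod ≤ ρ ^ ω.length := by
  induction ω with
  | nil => simp
  | cons i ω ih =>
    simp only [List.map_cons, List.prod_cons, List.length_cons, pow_succ]
    rw [mul_comm (ρ ^ ω.length) ρ]
    exact mul_le_mul (hρ i) ih (rword_pos r hr0 ω).le hρ0

/-- invariance of a set under all maps passes to words -/
lemma iterMap_image_subset {S : Set (EuclideanSpace ℝ (Fin d))}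
    (h : (⋃ i, φ i '' S) ⊆ S) : ∀ ω : List (Fin N), iterMap φ ω '' S ⊆ S := by
  intro ω
  induction ω with
  | nil => simp [iterMap]
  | cons i ω ih =>
    simp only [iterMap]
    rw [Set.image_comp]
    refine subset_trans ?_ h
    refine subset_trans (Set.image_mono ih) (subset_iUnion_of_subset i subset_rfl)

/-- decomposition of the attractor into cylinders of any level -/
lemma attr_decomp {K : Set (EuclideanSpace ℝ (Fin d))}
    (hattr : K = ⋃ i, φ i '' K) :
    ∀ n : ℕ, ∀ x ∈ K, ∃ ω : List (Fin N), ω.length = n ∧ x ∈ iterMap φ ω '' K := by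
  intro n
  induction n with
  | zero => intro x hx; exact ⟨[], rfl, by simpa [iterMap] using hx⟩
  | succ n ih =>
    intro x hx
    rw [hattr] at hx
    obtain ⟨i, hi⟩ := Set.mem_iUnion.mp hx
    obtain ⟨y, hy, rfl⟩ := hi
    obtain ⟨σ, hσlen, z, hz, hzy⟩ := ih y hy
    exact ⟨i :: σ, by simp [hσlen], z, hz, by simp [iterMap, hzy]⟩

/-- cylinders of equal length over distinct words are disjoint -/
lemma cyl_disjoint {O : Set (EuclideanSpace ℝ (Fin d))}
    (hinj : ∀ i, Function.Injective (φ i))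
    (hOfeas : (⋃ i, φ i '' O) ⊆ O)
    (hOdisj : Pairwise fun i j => Disjoint (φ i '' O) (φ j '' O)) :
    ∀ σ τ : List (Fin N), σ.length = τ.length → σ ≠ τ →
      Disjoint (iterMap φ σ '' O) (iterMap φ τ '' O) := by
  intro σ
  induction σ with
  | nil =>
    intro τ hlen hne
    cases τ with
    | nil => exact absurd rfl hne
    | cons j τ => simp at hlen
  | cons i σ ih =>
    intro τ hlen hne
    cases τ with
    | nil => simp at hlen
    | cons j τ =>
      simp only [List.length_cons, Nat.succ.injEq] at hlen
      by_cases hij : i = j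
      · subst hij
        have hστ : σ ≠ τ := fun h => hne (by rw [h])
        have hd := ih τ hlen hστ
        simp only [iterMap]
        rw [Set.image_comp, Set.image_comp]
        exact (Set.disjoint_image_iff (hinj i)).mpr hd
      · have hd := hOdisj hij
        simp only [iterMap]
        rw [Set.image_comp, Set.image_comp]
        refine hd.mono (Set.image_mono ?_) (Set.image_mono ?_)
        · exact iterMap_image_subset hOfeas σ
        · exact iterMap_image_subset hOfeas τ

/-- a preconnected set meeting an open set and its complement meets the frontier -/
lemma preconn_frontier {X : Type*} [TopologicalSpace X] {s U : Set X}
    (hs : IsPreconnected s) (hU : IsOpen U) {a b : X}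
    (ha : a ∈ s) (haU : a ∈ U) (hb : b ∈ s) (hbU : b ∉ U) :
    (s ∩ frontier U).Nonempty := by
  by_contra h
  rw [Set.not_nonempty_iff_eq_empty] at h
  have hfr : frontier U = closure U \ U := hU.frontier_eq
  have hbc : b ∈ (closure U)ᶜ := by
    intro hbcl
    have : b ∈ s ∩ frontier U := ⟨hb, hfr ▸ ⟨hbcl, hbU⟩⟩
    rw [h] at this
    exact this
  have hcov : s ⊆ U ∪ (closure U)ᶜ := by
    intro x hx
    by_cases hc : x ∈ closure U
    · left
      by_contra hxU
      have : x ∈ s ∩ frontier U := ⟨hx, hfr ▸ ⟨hc, hxU⟩⟩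
      rw [h] at this
      exact this
    · exact Or.inr hc
  obtain ⟨x, hxs, hxU, hxc⟩ := hs U (closure U)ᶜ hU isClosed_closure.isOpen_compl hcov
    ⟨a, ha, haU⟩ ⟨b, hb, hbc⟩
  exact hxc (subset_closure hxU)

end Stmt14Aux

/-- Localization identity: if `K` is the attractor of contracting similarities
satisfying the open set condition with bounded feasible open set `O`, and `B ⊆ O`
is open with `∂B ⊆ K`, then for every finite word `ω` and every `ε > 0`,
`K_ε ∩ φ_ω(B) = (φ_ω(K))_ε ∩ φ_ω(B)`. -/
theorem stmt14 {d N : ℕ} (hN : 2 ≤ N)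
    (φ : Fin N → EuclideanSpace ℝ (Fin d) → EuclideanSpace ℝ (Fin d))
    (hφ : ∀ i, ∃ r : ℝ, 0 < r ∧ r < 1 ∧
      ∀ x y, dist (φ i x) (φ i y) = r * dist x y)
    (K O : Set (EuclideanSpace ℝ (Fin d)))
    (hK : IsCompact K) (hKne : K.Nonempty) (hattr : K = ⋃ i, φ i '' K)
    (hOopen : IsOpen O) (hOne : O.Nonempty) (hObdd : Bornology.IsBounded O)
    (hOfeas : (⋃ i, φ i '' O) ⊆ O)
    (hOdisj : Pairwise fun i j => Disjoint (φ i '' O) (φ j '' O))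
    (B : Set (EuclideanSpace ℝ (Fin d)))
    (hBopen : IsOpen B) (hBO : B ⊆ O) (hBK : frontier B ⊆ K) :
    ∀ ω : List (Fin N), ∀ ε > 0,
      Metric.cthickening ε K ∩ (iterMap φ ω '' B) =
        Metric.cthickening ε (iterMap φ ω '' K) ∩ (iterMap φ ω '' B) := by
  classical
  choose r hr0 hr1 hrd using hφ
  have hinj : ∀ i, Function.Injective (φ i) := fun i => Stmt14Aux.sim_inj (hr0 i) (hrd i)
  have hKinv : (⋃ i, φ i '' K) ⊆ K := le_of_eq hattr.symm
  have hKsub := Stmt14Aux.iterMap_image_subset (φ := φ) hKinv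
  have hOsub := Stmt14Aux.iterMap_image_subset (φ := φ) hOfeas
  have hNe : Nonempty (Fin N) := ⟨⟨0, by omega⟩⟩
  set ρ := Finset.univ.sup' Finset.univ_nonempty r with hρ
  have hρ1 : ρ < 1 := (Finset.sup'_lt_iff _).mpr (fun i _ => hr1 i)
  have hρi : ∀ i, r i ≤ ρ := fun i => Finset.le_sup' r (Finset.mem_univ i)
  have hρ0 : 0 ≤ ρ := le_trans (hr0 (Classical.arbitrary _)).le (hρi _)
  obtain ⟨p, hp⟩ := hOne
  obtain ⟨C, hC⟩ := hK.isBounded.subset_closedBall p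
  -- K is contained in the closure of the feasible open set
  have hKclO : K ⊆ closure O := by
    intro x hx
    rw [Metric.mem_closure_iff]
    intro ε hε
    have htend : Filter.Tendsto (fun n => ρ ^ n * C) Filter.atTop (nhds 0) := by
      simpa using (tendsto_pow_atTop_nhds_zero_of_lt_one hρ0 hρ1).mul_const C
    obtain ⟨n, hn⟩ := (htend.eventually (gt_mem_nhds hε)).exists
    obtain ⟨σ, hσlen, x', hx', rfl⟩ := Stmt14Aux.attr_decomp hattr n x hx
    refine ⟨iterMap φ σ p, hOsub σ ⟨p, hp, rfl⟩, ?_⟩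
    rw [Stmt14Aux.iterMap_sim r hrd σ]
    calc (σ.map r).prod * dist x' p ≤ ρ ^ n * C := by
          refine mul_le_mul (hσlen ▸ Stmt14Aux.rword_le r ρ hr0 hρi hρ0 σ) ?_ dist_nonneg
            (by positivity)
          exact mem_closedBall.mp (hC hx')
      _ < ε := hn
  intro ω ε hε
  set f := iterMap φ ω with hfdef
  have hfsim := Stmt14Aux.iterMap_sim r hrd ω
  have hrωpos : 0 < (ω.map r).prod := Stmt14Aux.rword_pos r hr0 ω
  have hfinj : Function.Injective f := Stmt14Aux.sim_inj hrωpos hfsim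
  have hfcont : Continuous f := Stmt14Aux.sim_cont hrωpos hfsim
  have hfopen : IsOpenMap f := Stmt14Aux.sim_isOpenMap hrωpos hfsim
  have hfBopen : IsOpen (f '' B) := hfopen B hBopen
  have hclB : IsCompact (closure B) := (hObdd.subset hBO).isCompact_closure
  have hsub : closure (f '' B) ⊆ f '' closure B :=
    closure_minimal (Set.image_mono subset_closure) (hclB.image hfcont).isClosed
  have hfront : frontier (f '' B) ⊆ f '' K := by
    intro z hz
    rw [frontier, hfBopen.interior_eq] at hz
    obtain ⟨w, hw, rfl⟩ := hsub hz.1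
    have hwB : w ∉ B := fun hwB => hz.2 ⟨w, hwB, rfl⟩
    refine ⟨w, hBK ⟨hw, ?_⟩, rfl⟩
    rw [hBopen.interior_eq]
    exact hwB
  apply Set.Subset.antisymm
  · rintro x ⟨hxK, hxB⟩
    refine ⟨?_, hxB⟩
    obtain ⟨y, hyK, hyd⟩ := hK.exists_infEdist_eq_edist hKne x
    suffices h : ∃ z ∈ f '' K, dist x z ≤ dist x y by
      obtain ⟨z, hzf, hzd⟩ := h
      rw [Metric.mem_cthickening_iff] at hxK ⊢
      calc EMetric.infEdist x (f '' K) ≤ edist x z := EMetric.infEdist_le_edist_of_mem hzf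
        _ ≤ edist x y := by
            rw [edist_dist, edist_dist]
            exact ENNReal.ofReal_le_ofReal hzd
        _ = EMetric.infEdist x K := hyd.symm
        _ ≤ ENNReal.ofReal ε := hxK
    by_cases hyB : y ∈ f '' B
    · refine ⟨y, ?_, le_refl _⟩
      obtain ⟨σ, hσlen, hyσ⟩ := Stmt14Aux.attr_decomp hattr ω.length y hyK
      by_cases hσω : σ = ω
      · rw [hσω] at hyσ
        exact hyσ
      · exfalso
        have h1 : y ∈ closure (iterMap φ σ '' O) := by
          refine (Set.image_mono hKclO).trans
            (image_closure_subset_closure_image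
              (Stmt14Aux.sim_cont (Stmt14Aux.rword_pos r hr0 σ)
                (Stmt14Aux.iterMap_sim r hrd σ))) ?_
          exact hyσ
        have h2 : y ∈ f '' O := Set.image_mono hBO hyB
        have hdisj := Stmt14Aux.cyl_disjoint hinj hOfeas hOdisj ω σ hσlen.symm
          (fun h => hσω h.symm)
        have hfOopen : IsOpen (f '' O) := hfopen O hOopen
        exact Set.disjoint_left.mp (hdisj.closure_right hfOopen) h2 h1
    · have hseg : IsPreconnected (segment ℝ x y) := (convex_segment x y).isPreconnected
      obtain ⟨z, hzseg, hzfr⟩ := Stmt14Aux.preconn_frontier hseg hfBopen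
        (left_mem_segment ℝ x y) hxB (right_mem_segment ℝ x y) hyB
      refine ⟨z, hfront hzfr, ?_⟩
      have hsb : segment ℝ x y ⊆ closedBall x (dist x y) :=
        (convex_closedBall x (dist x y)).segment_subset (mem_closedBall_self dist_nonneg)
          (by rw [mem_closedBall, dist_comm])
      have := mem_closedBall.mp (hsb hzseg)
      rwa [dist_comm]
  · rintro x ⟨hxK, hxB⟩
    exact ⟨Metric.cthickening_subset_of_subset ε (hKsub ω) hxK, hxB⟩
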